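/- arXiv:0803.3111 — 3 statements merged into one kernel-verified Lean document; each statement's English description precedes it below -/
import Mathlib

section
/- For any real numbers x_0, ..., x_{n-1}, the operator norm of the n×n symmetric Toeplitz matrix T_n = [x_{|i-j|}] satisfies ‖T_n‖ ≥ sup_{t∈[0,1]} |x_0 + Σ_{j=1}^{n-1} 2(1 - j/n)·x_j·cos(2πjt)|. -/
open MeasureTheory ProbabilityTheory Filter Real
open scoped RealInnerProductSpace

/-- Operator (spectral) norm of a real matrix acting on Euclidean space. -/
noncomputable def opNorm {n : ℕ} (A : Matrix (Fin n) (Fin n) ℝ) : ℝ :=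
  ‖LinearMap.toContinuousLinearMap (Matrix.toEuclideanLin A)‖

/-- The symmetric Toeplitz matrix generated by `x 0, …, x (n-1)`. -/
noncomputable def toeplitz (n : ℕ) (x : ℕ → ℝ) : Matrix (Fin n) (Fin n) ℝ :=
  fun i j => x (Nat.dist i j)

lemma sum_dist_aux (n : ℕ) (g : ℕ → ℝ) :
    ∑ k ∈ Finset.range n, ∑ l ∈ Finset.range n, g (Nat.dist k l)
      = n * g 0 + ∑ j ∈ Finset.Ico 1 n, 2 * ((n : ℝ) - j) * g j := by
  induction n with
  | zero => simp
  | succ n ih =>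
    have hrefl : ∑ k ∈ Finset.range n, g (Nat.dist n k)
        = ∑ j ∈ Finset.Ico 1 (n+1), g j := by
      have h1 : ∀ k ∈ Finset.range n, g (Nat.dist n k) = g (n - k) := by
        intro k hk
        have : Nat.dist n k = n - k := by
          have := Finset.mem_range.mp hk
          simp [Nat.dist]; omega
        rw [this]
      rw [Finset.sum_congr rfl h1]
      rw [← Finset.sum_range_reflect (fun k => g (n - k)) n]
      rw [Finset.sum_Ico_eq_sum_range]
      apply Finset.sum_congr rfl
      intro k hk
      have := Finset.mem_range.mp hk
      congr 1
      omega
    calc ∑ k ∈ Finset.range (n+1), ∑ l ∈ Finset.range (n+1), g (Nat.dist k l)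
        = ∑ k ∈ Finset.range n, ((∑ l ∈ Finset.range n, g (Nat.dist k l)) + g (Nat.dist k n))
          + ((∑ l ∈ Finset.range n, g (Nat.dist n l)) + g (Nat.dist n n)) := by
          rw [Finset.sum_range_succ]
          congr 1
          · exact Finset.sum_congr rfl fun k _ => Finset.sum_range_succ _ _
          · exact Finset.sum_range_succ _ _
      _ = (∑ k ∈ Finset.range n, ∑ l ∈ Finset.range n, g (Nat.dist k l))
          + (∑ k ∈ Finset.range n, g (Nat.dist n k))
          + ((∑ l ∈ Finset.range n, g (Nat.dist n l)) + g 0) := by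
          rw [Finset.sum_add_distrib, Nat.dist_self]
          congr 2
          apply Finset.sum_congr rfl
          intro k _; rw [Nat.dist_comm]
      _ = (n * g 0 + ∑ j ∈ Finset.Ico 1 n, 2 * ((n : ℝ) - j) * g j)
          + 2 * (∑ j ∈ Finset.Ico 1 (n+1), g j) + g 0 := by
          rw [ih, hrefl]; ring
      _ = (n+1 : ℕ) * g 0 + ∑ j ∈ Finset.Ico 1 (n+1), 2 * (((n+1 : ℕ) : ℝ) - j) * g j := by
          have hext : ∑ j ∈ Finset.Ico 1 (n+1), 2 * ((n : ℝ) - j) * g j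
              = ∑ j ∈ Finset.Ico 1 n, 2 * ((n : ℝ) - j) * g j := by
            rcases Nat.eq_zero_or_pos n with h0 | h0
            · subst h0; simp
            · rw [Finset.sum_Ico_succ_top (by omega : 1 ≤ n)]
              simp
          have hsplit : ∑ j ∈ Finset.Ico 1 (n+1), 2 * (((n+1 : ℕ) : ℝ) - j) * g j
              = ∑ j ∈ Finset.Ico 1 (n+1), 2 * ((n : ℝ) - j) * g j
                + 2 * ∑ j ∈ Finset.Ico 1 (n+1), g j := by
            rw [Finset.mul_sum, ← Finset.sum_add_distrib]
            apply Finset.sum_congr rfl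
            intro j _
            push_cast
            ring
          rw [hsplit, hext]
          push_cast
          ring

lemma toeplitz_pointwise (n : ℕ) (hn : 0 < n) (x : ℕ → ℝ) (t : ℝ) :
    |x 0 + ∑ j ∈ Finset.Ico 1 n,
        2 * (1 - (j : ℝ) / n) * x j * Real.cos (2 * Real.pi * j * t)|
      ≤ opNorm (toeplitz n x) := by
  set T := toeplitz n x with hT
  set L := LinearMap.toContinuousLinearMap (Matrix.toEuclideanLin T) with hL
  set c : EuclideanSpace ℝ (Fin n) := WithLp.toLp 2 (fun k => Real.cos (2 * π * k * t)) with hc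
  set s : EuclideanSpace ℝ (Fin n) := WithLp.toLp 2 (fun k => Real.sin (2 * π * k * t)) with hs
  have h1 : ⟪c, L c⟫ = ∑ k : Fin n, ∑ l : Fin n,
      x (Nat.dist k l) * (Real.cos (2*π*k*t) * Real.cos (2*π*l*t)) := by
    simp [PiLp.inner_apply, RCLike.inner_apply, hL, Matrix.toEuclideanLin_apply,
      Matrix.mulVec, dotProduct, Finset.mul_sum, hc, T, toeplitz]
    apply Finset.sum_congr rfl; intro k _; rw [Finset.sum_mul]; apply Finset.sum_congr rfl; intro l _; ring
  have h2 : ⟪s, L s⟫ = ∑ k : Fin n, ∑ l : Fin n,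
      x (Nat.dist k l) * (Real.sin (2*π*k*t) * Real.sin (2*π*l*t)) := by
    simp [PiLp.inner_apply, RCLike.inner_apply, hL, Matrix.toEuclideanLin_apply,
      Matrix.mulVec, dotProduct, Finset.mul_sum, hs, T, toeplitz]
    apply Finset.sum_congr rfl; intro k _; rw [Finset.sum_mul]; apply Finset.sum_congr rfl; intro l _; ring
  set g : ℕ → ℝ := fun j => x j * Real.cos (2 * π * j * t) with hg
  have hcomb : ⟪c, L c⟫ + ⟪s, L s⟫
      = ∑ k ∈ Finset.range n, ∑ l ∈ Finset.range n, g (Nat.dist k l) := by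
    rw [h1, h2, ← Finset.sum_add_distrib]
    rw [← Fin.sum_univ_eq_sum_range (fun k =>
      ∑ l ∈ Finset.range n, g (Nat.dist k l)) n]
    apply Finset.sum_congr rfl
    intro k _
    rw [← Finset.sum_add_distrib,
      ← Fin.sum_univ_eq_sum_range (fun l => g (Nat.dist (k : ℕ) l)) n]
    apply Finset.sum_congr rfl
    intro l _
    have key : Real.cos (2*π*k*t) * Real.cos (2*π*l*t)
        + Real.sin (2*π*k*t) * Real.sin (2*π*l*t)
        = Real.cos (2 * π * (Nat.dist (k : ℕ) (l : ℕ)) * t) := by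
      rw [← Real.cos_sub]
      rcases le_total (l : ℕ) (k : ℕ) with h | h
      · have : Nat.dist (k : ℕ) (l : ℕ) = (k : ℕ) - (l : ℕ) := Nat.dist_eq_sub_of_le_right h
        rw [this]
        congr 1
        have : ((((k : ℕ) - (l : ℕ)) : ℕ) : ℝ) = (k : ℕ) - (l : ℕ) := by
          push_cast [h]; ring
        rw [this]; ring
      · have hd : Nat.dist (k : ℕ) (l : ℕ) = (l : ℕ) - (k : ℕ) := Nat.dist_eq_sub_of_le h
        rw [hd]
        have : ((((l : ℕ) - (k : ℕ)) : ℕ) : ℝ) = (l : ℕ) - (k : ℕ) := by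
          push_cast [h]; ring
        rw [this]
        rw [show 2*π*(k:ℕ)*t - 2*π*(l:ℕ)*t = -(2 * π * ((l:ℕ) - (k:ℕ)) * t) by ring,
          Real.cos_neg]
    rw [hg]
    dsimp only
    rw [← key]
    ring
  have hval : ⟪c, L c⟫ + ⟪s, L s⟫
      = n * (x 0 + ∑ j ∈ Finset.Ico 1 n,
          2 * (1 - (j : ℝ) / n) * x j * Real.cos (2 * Real.pi * j * t)) := by
    rw [hcomb, sum_dist_aux n g]
    have hg0 : g 0 = x 0 := by simp [hg]
    rw [hg0, mul_add, Finset.mul_sum]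
    congr 1
    apply Finset.sum_congr rfl
    intro j hj
    have hn' : (n : ℝ) ≠ 0 := Nat.cast_ne_zero.mpr hn.ne'
    rw [hg]
    dsimp only
    field_simp
  have hnorm : ‖c‖ ^ 2 + ‖s‖ ^ 2 = n := by
    rw [← real_inner_self_eq_norm_sq, ← real_inner_self_eq_norm_sq]
    simp only [PiLp.inner_apply, RCLike.inner_apply, starRingEnd_apply, star_trivial, hc, hs]
    rw [← Finset.sum_add_distrib]
    have : ∀ k : Fin n, Real.cos (2*π*k*t) * Real.cos (2*π*k*t)
        + Real.sin (2*π*k*t) * Real.sin (2*π*k*t) = 1 := by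
      intro k
      have := Real.sin_sq_add_cos_sq (2*π*k*t)
      nlinarith
    rw [Finset.sum_congr rfl fun k _ => this k]
    simp
  have hboundc : |⟪c, L c⟫| ≤ ‖L‖ * ‖c‖ ^ 2 := by
    calc |⟪c, L c⟫| ≤ ‖c‖ * ‖L c‖ := abs_real_inner_le_norm c (L c)
      _ ≤ ‖c‖ * (‖L‖ * ‖c‖) := by
          apply mul_le_mul_of_nonneg_left (L.le_opNorm c) (norm_nonneg c)
      _ = ‖L‖ * ‖c‖ ^ 2 := by ring
  have hbounds : |⟪s, L s⟫| ≤ ‖L‖ * ‖s‖ ^ 2 := by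
    calc |⟪s, L s⟫| ≤ ‖s‖ * ‖L s‖ := abs_real_inner_le_norm s (L s)
      _ ≤ ‖s‖ * (‖L‖ * ‖s‖) := by
          apply mul_le_mul_of_nonneg_left (L.le_opNorm s) (norm_nonneg s)
      _ = ‖L‖ * ‖s‖ ^ 2 := by ring
  have htotal : |⟪c, L c⟫ + ⟪s, L s⟫| ≤ ‖L‖ * n := by
    calc |⟪c, L c⟫ + ⟪s, L s⟫| ≤ |⟪c, L c⟫| + |⟪s, L s⟫| := abs_add_le _ _
      _ ≤ ‖L‖ * ‖c‖ ^ 2 + ‖L‖ * ‖s‖ ^ 2 := add_le_add hboundc hbounds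
      _ = ‖L‖ * (‖c‖ ^ 2 + ‖s‖ ^ 2) := by ring
      _ = ‖L‖ * n := by rw [hnorm]
  rw [hval] at htotal
  have hnpos : (0 : ℝ) < n := Nat.cast_pos.mpr hn
  rw [abs_mul, abs_of_pos hnpos, mul_comm (‖L‖) (n : ℝ)] at htotal
  have := (mul_le_mul_iff_right₀ hnpos).mp htotal
  exact this

theorem stmt1 (n : ℕ) (hn : 0 < n) (x : ℕ → ℝ) :
    sSup ((fun t : ℝ =>
        |x 0 + ∑ j ∈ Finset.Ico 1 n,
          2 * (1 - (j : ℝ) / n) * x j * Real.cos (2 * Real.pi * j * t)|) ''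
          Set.Icc (0 : ℝ) 1) ≤ opNorm (toeplitz n x) := by
  apply Real.sSup_le
  · rintro y ⟨t, _, rfl⟩
    exact toeplitz_pointwise n hn x t
  · exact norm_nonneg _
end

section
/- Let X_0, X_1, ... be i.i.d. with E X_0 = 0 and E X_0² < ∞, and let T_n' be the Toeplitz matrix generated by the truncated variables X_i' = X_i·1_{|X_i| ≤ √(i log i)}. Then |E‖T_n‖ − E‖T_n'‖| = o(√(n log n)) as n → ∞. -/
open MeasureTheory ProbabilityTheory Filter Real

lemma opNorm_le_of_rowsum {n : ℕ} (M : Matrix (Fin n) (Fin n) ℝ) {R : ℝ} (hR : 0 ≤ R)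
    (hrow : ∀ i, ∑ j, |M i j| ≤ R) (hcol : ∀ j, ∑ i, |M i j| ≤ R) : opNorm M ≤ R := by
  apply ContinuousLinearMap.opNorm_le_bound _ hR
  intro v
  have happ : ∀ i, ‖(LinearMap.toContinuousLinearMap (Matrix.toEuclideanLin M) v) i‖
      = |∑ j, M i j * v j| := by
    intro i
    have : (LinearMap.toContinuousLinearMap (Matrix.toEuclideanLin M) v) i
        = (M.mulVec (fun j => v j)) i := rfl
    rw [this]
    simp [Matrix.mulVec, dotProduct, Real.norm_eq_abs]
  rw [EuclideanSpace.norm_eq, EuclideanSpace.norm_eq]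
  have key : ∑ i, ‖(LinearMap.toContinuousLinearMap (Matrix.toEuclideanLin M) v) i‖ ^ 2
      ≤ (R * Real.sqrt (∑ j, ‖v j‖ ^ 2)) ^ 2 := by
    have hCS : ∀ i, ‖(LinearMap.toContinuousLinearMap (Matrix.toEuclideanLin M) v) i‖ ^ 2
        ≤ R * ∑ j, |M i j| * (v j) ^ 2 := by
      intro i
      rw [happ i]
      have h1 : |∑ j, M i j * v j| ^ 2 ≤ (∑ j, |M i j| * |v j|) ^ 2 := by
        apply pow_le_pow_left₀ (abs_nonneg _)
        calc |∑ j, M i j * v j| ≤ ∑ j, |M i j * v j| := Finset.abs_sum_le_sum_abs _ _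
          _ = ∑ j, |M i j| * |v j| := by simp [abs_mul]
      have h2 : (∑ j, |M i j| * |v j|) ^ 2
          ≤ (∑ j, Real.sqrt |M i j| ^ 2) * ∑ j, (Real.sqrt |M i j| * |v j|) ^ 2 := by
        have := Finset.sum_mul_sq_le_sq_mul_sq Finset.univ
          (fun j => Real.sqrt |M i j|) (fun j => Real.sqrt |M i j| * |v j|)
        calc (∑ j, |M i j| * |v j|) ^ 2
            = (∑ j, Real.sqrt |M i j| * (Real.sqrt |M i j| * |v j|)) ^ 2 := by
              congr 1; apply Finset.sum_congr rfl; intro j _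
              rw [← mul_assoc, Real.mul_self_sqrt (abs_nonneg _)]
          _ ≤ _ := this
      have h3 : (∑ j, Real.sqrt |M i j| ^ 2) ≤ R := by
        simpa [Real.sq_sqrt, abs_nonneg] using hrow i
      have h4 : (∑ j, (Real.sqrt |M i j| * |v j|) ^ 2) = ∑ j, |M i j| * (v j) ^ 2 := by
        apply Finset.sum_congr rfl; intro j _
        rw [mul_pow, Real.sq_sqrt (abs_nonneg _), sq_abs]
      have h5 : 0 ≤ ∑ j, |M i j| * (v j) ^ 2 :=
        Finset.sum_nonneg fun j _ => mul_nonneg (abs_nonneg _) (sq_nonneg _)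
      calc |∑ j, M i j * v j| ^ 2 ≤ (∑ j, |M i j| * |v j|) ^ 2 := h1
        _ ≤ (∑ j, Real.sqrt |M i j| ^ 2) * ∑ j, (Real.sqrt |M i j| * |v j|) ^ 2 := h2
        _ ≤ R * ∑ j, |M i j| * (v j) ^ 2 := by
            rw [h4]; exact mul_le_mul_of_nonneg_right h3 h5
    calc ∑ i, ‖(LinearMap.toContinuousLinearMap (Matrix.toEuclideanLin M) v) i‖ ^ 2
        ≤ ∑ i, R * ∑ j, |M i j| * (v j) ^ 2 := Finset.sum_le_sum fun i _ => hCS i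
      _ = R * ∑ j, (∑ i, |M i j|) * (v j) ^ 2 := by
          rw [← Finset.mul_sum]; congr 1; rw [Finset.sum_comm]
          apply Finset.sum_congr rfl; intro j _; rw [Finset.sum_mul]
      _ ≤ R * ∑ j, R * (v j) ^ 2 := by
          apply mul_le_mul_of_nonneg_left _ hR
          exact Finset.sum_le_sum fun j _ =>
            mul_le_mul_of_nonneg_right (hcol j) (sq_nonneg _)
      _ = (R * Real.sqrt (∑ j, ‖v j‖ ^ 2)) ^ 2 := by
          rw [mul_pow, Real.sq_sqrt (Finset.sum_nonneg fun j _ => sq_nonneg _)]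
          simp [Finset.mul_sum, Real.norm_eq_abs, sq_abs]
          ring
  calc Real.sqrt (∑ i, ‖(LinearMap.toContinuousLinearMap (Matrix.toEuclideanLin M) v) i‖ ^ 2)
      ≤ Real.sqrt ((R * Real.sqrt (∑ j, ‖v j‖ ^ 2)) ^ 2) := Real.sqrt_le_sqrt key
    _ = R * Real.sqrt (∑ j, ‖v j‖ ^ 2) :=
        Real.sqrt_sq (mul_nonneg hR (Real.sqrt_nonneg _))

lemma sum_abs_comp_le {n : ℕ} (y : ℕ → ℝ) (s : Finset (Fin n)) (g : Fin n → ℕ)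
    (hinj : Set.InjOn g s) (hlt : ∀ j ∈ s, g j < n) :
    ∑ j ∈ s, |y (g j)| ≤ ∑ k ∈ Finset.range n, |y k| := by
  rw [← Finset.sum_image (f := fun k => |y k|) (g := g) (fun a ha b hb => hinj ha hb)]
  apply Finset.sum_le_sum_of_subset_of_nonneg
  · intro k hk
    simp only [Finset.mem_image] at hk
    obtain ⟨j, hj, rfl⟩ := hk
    exact Finset.mem_range.2 (hlt j hj)
  · intros; exact abs_nonneg _

lemma rowsum_toeplitz {n : ℕ} (y : ℕ → ℝ) (i : Fin n) :
    ∑ j : Fin n, |y (Nat.dist i j)| ≤ 2 * ∑ k ∈ Finset.range n, |y k| := by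
  have hsplit : ∑ j : Fin n, |y (Nat.dist i j)|
      = (∑ j ∈ Finset.univ.filter (fun j : Fin n => (j : ℕ) ≤ (i : ℕ)), |y ((i : ℕ) - j)|)
        + ∑ j ∈ Finset.univ.filter (fun j : Fin n => ¬ (j : ℕ) ≤ (i : ℕ)), |y ((j : ℕ) - i)| := by
    rw [← Finset.sum_filter_add_sum_filter_not Finset.univ (fun j : Fin n => (j : ℕ) ≤ (i : ℕ))]
    congr 1
    · apply Finset.sum_congr rfl; intro j hj
      simp only [Finset.mem_filter] at hj
      rw [Nat.dist_eq_sub_of_le_right hj.2]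
    · apply Finset.sum_congr rfl; intro j hj
      simp only [Finset.mem_filter] at hj
      rw [Nat.dist_eq_sub_of_le (le_of_not_ge hj.2)]
  rw [hsplit, two_mul]
  apply add_le_add
  · apply sum_abs_comp_le
    · intro a ha b hb hab
      simp only [Finset.coe_filter, Set.mem_setOf_eq, Finset.mem_univ, true_and] at ha hb
      have hab' : (i : ℕ) - a = (i : ℕ) - b := hab
      have : (a : ℕ) = b := by omega
      exact Fin.ext this
    · intro j hj
      exact lt_of_le_of_lt (Nat.sub_le _ _) i.isLt
  · apply sum_abs_comp_le
    · intro a ha b hb hab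
      simp only [Finset.coe_filter, Set.mem_setOf_eq, Finset.mem_univ, true_and] at ha hb
      have hab' : (a : ℕ) - i = (b : ℕ) - i := hab
      have : (a : ℕ) = b := by omega
      exact Fin.ext this
    · intro j hj
      exact lt_of_le_of_lt (Nat.sub_le _ _) j.isLt

lemma sum_one_div_sqrt (n : ℕ) :
    ∑ k ∈ Finset.range n, 1 / Real.sqrt (k + 1) ≤ 2 * Real.sqrt n := by
  induction n with
  | zero => simp
  | succ n ih =>
    rw [Finset.sum_range_succ]
    have h1 : 1 / Real.sqrt (n + 1) ≤ 2 * (Real.sqrt (n + 1) - Real.sqrt n) := by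
      have hs : Real.sqrt (n + 1) - Real.sqrt n
          = 1 / (Real.sqrt (n + 1) + Real.sqrt n) := by
        rw [eq_div_iff (by positivity)]
        have h1 : Real.sqrt (n+1) * Real.sqrt (n+1) = (n : ℝ) + 1 :=
          Real.mul_self_sqrt (by positivity)
        have h2 : Real.sqrt n * Real.sqrt n = (n : ℝ) := Real.mul_self_sqrt (by positivity)
        nlinarith [h1, h2]
      rw [hs, mul_one_div, div_le_div_iff₀ (by positivity) (by positivity)]
      have h3 : Real.sqrt n ≤ Real.sqrt (n + 1) :=
        Real.sqrt_le_sqrt (by push_cast; linarith)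
      have h4 : (0:ℝ) ≤ Real.sqrt (n+1) := Real.sqrt_nonneg _
      nlinarith
    push_cast
    push_cast at ih h1
    linarith

lemma sqrt_isLittleO :
    (fun n : ℕ => Real.sqrt n) =o[atTop] fun n : ℕ => Real.sqrt (n * Real.log n) := by
  rw [Asymptotics.isLittleO_iff]
  intro ε hε
  have hlog : Tendsto (fun n : ℕ => Real.log n) atTop atTop :=
    Real.tendsto_log_atTop.comp tendsto_natCast_atTop_atTop
  filter_upwards [hlog.eventually_ge_atTop (max 1 ((1/ε)^2))] with n hn
  have hln : (0:ℝ) ≤ Real.log n := le_trans (le_trans zero_le_one (le_max_left _ _)) hn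
  have hsq : 1/ε ≤ Real.sqrt (Real.log n) := by
    have : ((1/ε)^2 : ℝ) ≤ Real.log n := le_trans (le_max_right _ _) hn
    calc (1/ε : ℝ) = Real.sqrt ((1/ε)^2) := (Real.sqrt_sq (by positivity)).symm
      _ ≤ _ := Real.sqrt_le_sqrt this
  rw [Real.norm_eq_abs, Real.norm_eq_abs, abs_of_nonneg (Real.sqrt_nonneg _),
    abs_of_nonneg (Real.sqrt_nonneg _), Real.sqrt_mul (Nat.cast_nonneg n)]
  have h1 : 1 ≤ ε * Real.sqrt (Real.log n) := by
    calc (1:ℝ) = ε * (1/ε) := by field_simp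
      _ ≤ ε * Real.sqrt (Real.log n) := mul_le_mul_of_nonneg_left hsq hε.le
  calc Real.sqrt n = Real.sqrt n * 1 := (mul_one _).symm
    _ ≤ Real.sqrt n * (ε * Real.sqrt (Real.log n)) := by
        apply mul_le_mul_of_nonneg_left h1 (Real.sqrt_nonneg _)
    _ = ε * (Real.sqrt n * Real.sqrt (Real.log n)) := by ring

lemma abs_opNorm_sub_le {n : ℕ} (A B : Matrix (Fin n) (Fin n) ℝ) :
    |opNorm A - opNorm B| ≤ opNorm (A - B) := by
  have h : opNorm (A - B) = ‖LinearMap.toContinuousLinearMap (Matrix.toEuclideanLin A)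
      - LinearMap.toContinuousLinearMap (Matrix.toEuclideanLin B)‖ := by
    rw [opNorm, map_sub, map_sub]
  rw [h]
  exact abs_norm_sub_norm_le _ _

lemma opNorm_toeplitz_le (n : ℕ) (y : ℕ → ℝ) :
    opNorm (toeplitz n y) ≤ 2 * ∑ k ∈ Finset.range n, |y k| := by
  apply opNorm_le_of_rowsum
  · positivity
  · intro i; exact rowsum_toeplitz y i
  · intro j
    have : ∀ i : Fin n, toeplitz n y i j = y (Nat.dist j i) := by
      intro i; unfold toeplitz; rw [Nat.dist_comm]
    simp only [this]
    exact rowsum_toeplitz y j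

lemma measurable_toeplitz_opNorm {Ω : Type*} [MeasurableSpace Ω] (n : ℕ) (X : ℕ → Ω → ℝ)
    (hmeas : ∀ i, Measurable (X i)) :
    Measurable (fun ω => opNorm (toeplitz n (fun i => X i ω))) := by
  have hc0 : Continuous (fun M : Matrix (Fin n) (Fin n) ℝ => opNorm M) := by
    have h : (fun M : Matrix (Fin n) (Fin n) ℝ => opNorm M)
        = (fun g : EuclideanSpace ℝ (Fin n) →L[ℝ] EuclideanSpace ℝ (Fin n) => ‖g‖) ∘
          ((Matrix.toEuclideanLin.trans LinearMap.toContinuousLinearMap :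
            Matrix (Fin n) (Fin n) ℝ ≃ₗ[ℝ] _)).toLinearMap := rfl
    rw [h]
    exact continuous_norm.comp (LinearMap.continuous_of_finiteDimensional _)
  have hof : Continuous (fun f : Fin n → Fin n → ℝ => (Matrix.of f : Matrix (Fin n) (Fin n) ℝ)) :=
    continuous_matrix fun i j => (continuous_apply j).comp (continuous_apply i)
  have hc : Continuous (fun f : Fin n → Fin n → ℝ => opNorm (Matrix.of f)) := hc0.comp hof
  have : (fun ω => opNorm (toeplitz n (fun i => X i ω)))
      = (fun f : Fin n → Fin n → ℝ => opNorm (Matrix.of f)) ∘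
        (fun ω => fun i j : Fin n => X (Nat.dist i j) ω) := rfl
  rw [this]
  apply hc.measurable.comp
  apply measurable_pi_lambda
  intro i
  apply measurable_pi_lambda
  intro j
  exact hmeas _

lemma abs_integrable_of_sq {Ω : Type*} [MeasurableSpace Ω] (μ : Measure Ω)
    [IsProbabilityMeasure μ] (X : Ω → ℝ) (hm : Measurable X)
    (hL2 : Integrable (fun ω => (X ω) ^ 2) μ) : Integrable (fun ω => |X ω|) μ := by
  have h : Integrable (fun ω => (X ω) ^ 2 + 1) μ := hL2.add (integrable_const 1)
  apply h.mono (hm.abs.aestronglyMeasurable)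
  filter_upwards with ω
  rw [Real.norm_eq_abs, Real.norm_eq_abs, abs_abs]
  have := abs_nonneg (X ω)
  have h2 : |X ω| ≤ (X ω)^2 + 1 := by nlinarith [sq_abs (X ω), sq_nonneg (|X ω| - 1)]
  calc |X ω| ≤ (X ω)^2 + 1 := h2
    _ ≤ |(X ω)^2 + 1| := le_abs_self _

open Asymptotics in
theorem stmt9 {Ω : Type*} [MeasurableSpace Ω] (μ : Measure Ω) [IsProbabilityMeasure μ]
    (X : ℕ → Ω → ℝ) (hmeas : ∀ i, Measurable (X i))
    (hindep : iIndepFun X μ)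
    (hident : ∀ i, IdentDistrib (X i) (X 0) μ μ)
    (hmean : μ[X 0] = 0)
    (hL2 : Integrable (fun ω => (X 0 ω) ^ 2) μ)
    (X' : ℕ → Ω → ℝ)
    (hX' : ∀ i ω, X' i ω = if |X i ω| ≤ Real.sqrt (i * Real.log i) then X i ω else 0) :
    (fun n : ℕ =>
        |μ[fun ω => opNorm (toeplitz n (fun i => X i ω))] -
          μ[fun ω => opNorm (toeplitz n (fun i => X' i ω))]|)
      =o[atTop] fun n : ℕ => Real.sqrt (n * Real.log n) := by
  -- truncation threshold
  set t : ℕ → ℝ := fun k => Real.sqrt (k * Real.log k) with ht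
  -- the truncation error function
  set g : ℕ → ℝ → ℝ := fun k x => if |x| ≤ t k then 0 else |x| with hg
  have hgmeas : ∀ k, Measurable (g k) := fun k =>
    Measurable.ite (measurableSet_le measurable_abs measurable_const)
      measurable_const measurable_abs
  have hg_nonneg : ∀ k x, 0 ≤ g k x := by
    intro k x; simp only [hg]; split <;> [rfl; exact abs_nonneg x]
  have hg_le_abs : ∀ k x, g k x ≤ |x| := by
    intro k x; simp only [hg]; split <;> [exact abs_nonneg x; rfl]
  -- measurability of X'
  have hmeas' : ∀ k, Measurable (X' k) := by
    intro k
    have : X' k = fun ω => if |X k ω| ≤ t k then X k ω else 0 := funext fun ω => hX' k ω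
    rw [this]
    exact Measurable.ite (measurableSet_le (hmeas k).abs measurable_const) (hmeas k)
      measurable_const
  -- |X k - X' k| = g k (X k)
  have hdiff : ∀ k ω, |X k ω - X' k ω| = g k (X k ω) := by
    intro k ω
    rw [hX' k ω]
    simp only [hg]
    split
    · simp
    · simp
  -- basic integrability
  have habs_int : Integrable (fun ω => |X 0 ω|) μ := abs_integrable_of_sq μ _ (hmeas 0) hL2
  have habs_int_k : ∀ k, Integrable (fun ω => |X k ω|) μ := by
    intro k
    exact ((hident k).comp measurable_abs).integrable_iff.mpr habs_int
  have hint0 : ∀ k, Integrable (fun ω => g k (X 0 ω)) μ := by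
    intro k
    apply habs_int.mono
      (show Measurable fun ω => g k (X 0 ω) from (hgmeas k).comp (hmeas 0)).aestronglyMeasurable
    filter_upwards with ω
    simp only [Real.norm_eq_abs, abs_abs, abs_of_nonneg (hg_nonneg k (X 0 ω))]
    exact hg_le_abs k (X 0 ω)
  have hintk : ∀ k, Integrable (fun ω => g k (X k ω)) μ := by
    intro k
    exact ((hident k).comp (hgmeas k)).integrable_iff.mpr (hint0 k)
  have heqk : ∀ k, ∫ ω, g k (X k ω) ∂μ = ∫ ω, g k (X 0 ω) ∂μ := fun k =>
    ((hident k).comp (hgmeas k)).integral_eq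
  -- the constants
  set C1 : ℝ := ∫ ω, |X 0 ω| ∂μ with hC1
  set C2 : ℝ := ∫ ω, (X 0 ω) ^ 2 ∂μ with hC2
  have hC1nn : 0 ≤ C1 := integral_nonneg fun ω => abs_nonneg _
  have hC2nn : 0 ≤ C2 := integral_nonneg fun ω => sq_nonneg _
  set c : ℝ := C2 / Real.sqrt (Real.log 2 / 2) with hc
  have hcnn : 0 ≤ c := div_nonneg hC2nn (Real.sqrt_nonneg _)
  set K : ℝ := 2 * C1 + c with hK
  have hKnn : 0 ≤ K := by positivity
  -- the key per-index bound
  have hek : ∀ k : ℕ, ∫ ω, g k (X 0 ω) ∂μ ≤ K * (1 / Real.sqrt (k + 1)) := by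
    intro k
    have hC1bound : ∫ ω, g k (X 0 ω) ∂μ ≤ C1 :=
      integral_mono (hint0 k) habs_int fun ω => hg_le_abs k _
    by_cases hk2 : 2 ≤ k
    · -- t k > 0 and t k ≥ √(log 2 / 2) * √(k+1)
      have hlog2 : (0:ℝ) < Real.log 2 := Real.log_pos (by norm_num)
      have hklogk : ((k:ℝ) + 1) * (Real.log 2 / 2) ≤ (k:ℝ) * Real.log k := by
        have h1 : Real.log 2 ≤ Real.log k :=
          Real.log_le_log (by norm_num) (by exact_mod_cast hk2)
        have h2 : ((k:ℝ) + 1) * (Real.log 2 / 2) ≤ (k:ℝ) * Real.log 2 := by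
          have : (1:ℝ) ≤ k := by exact_mod_cast le_trans (by norm_num) hk2
          nlinarith
        have h3 : (k:ℝ) * Real.log 2 ≤ (k:ℝ) * Real.log k :=
          mul_le_mul_of_nonneg_left h1 (Nat.cast_nonneg k)
        linarith
      have htpos : 0 < t k := by
        rw [ht]
        apply Real.sqrt_pos.mpr
        have : (0:ℝ) < ((k:ℝ) + 1) * (Real.log 2 / 2) := by positivity
        linarith
      have hbound1 : ∫ ω, g k (X 0 ω) ∂μ ≤ C2 / t k := by
        have hpt : ∀ ω, g k (X 0 ω) ≤ (X 0 ω) ^ 2 / t k := by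
          intro ω
          simp only [hg]
          split
          · positivity
          · rename_i hcond
            push_neg at hcond
            rw [le_div_iff₀ htpos]
            nlinarith [sq_abs (X 0 ω), abs_nonneg (X 0 ω)]
        calc ∫ ω, g k (X 0 ω) ∂μ ≤ ∫ ω, (X 0 ω) ^ 2 / t k ∂μ :=
              integral_mono (hint0 k) (hL2.div_const _) hpt
          _ = C2 / t k := by rw [integral_div]
      have hts : Real.sqrt ((k:ℝ) + 1) * Real.sqrt (Real.log 2 / 2) ≤ t k := by
        rw [ht]
        calc Real.sqrt ((k:ℝ) + 1) * Real.sqrt (Real.log 2 / 2)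
            = Real.sqrt (((k:ℝ) + 1) * (Real.log 2 / 2)) := by
              rw [Real.sqrt_mul (by positivity), mul_comm]
          _ ≤ Real.sqrt ((k:ℝ) * Real.log k) := Real.sqrt_le_sqrt hklogk
      have hsqkpos : (0:ℝ) < Real.sqrt ((k:ℝ) + 1) := by positivity
      have hsl2pos : (0:ℝ) < Real.sqrt (Real.log 2 / 2) := by positivity
      have hbound2 : C2 / t k ≤ c * (1 / Real.sqrt ((k:ℝ) + 1)) := by
        rw [hc, div_mul_eq_mul_div, mul_one_div, div_div]
        exact div_le_div_of_nonneg_left hC2nn (by positivity) hts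
      have : c * (1 / Real.sqrt ((k:ℝ) + 1)) ≤ K * (1 / Real.sqrt ((k:ℝ) + 1)) := by
        apply mul_le_mul_of_nonneg_right _ (by positivity)
        rw [hK]; linarith
      push_cast
      linarith
    · -- k = 0 or 1
      have hk1 : (k:ℝ) + 1 ≤ 2 := by
        have : k ≤ 1 := by omega
        push_cast
        exact_mod_cast by omega
      have h2 : Real.sqrt ((k:ℝ) + 1) ≤ Real.sqrt 2 := Real.sqrt_le_sqrt hk1
      have hs2 : Real.sqrt 2 ≤ 2 := by
        calc Real.sqrt 2 ≤ Real.sqrt 4 := Real.sqrt_le_sqrt (by norm_num)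
          _ = 2 := by
            rw [show (4:ℝ) = 2^2 by norm_num, Real.sqrt_sq (by norm_num)]
      have hhalf : (1:ℝ)/2 ≤ 1 / Real.sqrt ((k:ℝ) + 1) := by
        apply div_le_div_of_nonneg_left one_pos.le (by positivity)
        linarith
      have : C1 ≤ K * (1 / Real.sqrt ((k:ℝ) + 1)) := by
        calc C1 = 2 * C1 * (1/2) := by ring
          _ ≤ 2 * C1 * (1 / Real.sqrt ((k:ℝ)+1)) :=
              mul_le_mul_of_nonneg_left hhalf (by positivity)
          _ ≤ K * (1 / Real.sqrt ((k:ℝ)+1)) := by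
              apply mul_le_mul_of_nonneg_right _ (by positivity)
              rw [hK]; linarith
      push_cast
      linarith
  -- per-n bound
  have hmain : ∀ n : ℕ,
      |μ[fun ω => opNorm (toeplitz n (fun i => X i ω))] -
        μ[fun ω => opNorm (toeplitz n (fun i => X' i ω))]| ≤ 4 * K * Real.sqrt n := by
    intro n
    set A : Ω → ℝ := fun ω => opNorm (toeplitz n (fun i => X i ω)) with hA
    set B : Ω → ℝ := fun ω => opNorm (toeplitz n (fun i => X' i ω)) with hB
    have hdom : Integrable (fun ω => 2 * ∑ k ∈ Finset.range n, |X k ω|) μ :=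
      (integrable_finset_sum _ fun k _ => habs_int_k k).const_mul 2
    have hAint : Integrable A μ := by
      apply hdom.mono (measurable_toeplitz_opNorm n X hmeas).aestronglyMeasurable
      filter_upwards with ω
      rw [Real.norm_eq_abs, Real.norm_eq_abs,
        abs_of_nonneg (show (0:ℝ) ≤ opNorm _ from norm_nonneg _)]
      refine le_trans (opNorm_toeplitz_le n _) (le_abs_self _)
    have hBint : Integrable B μ := by
      apply hdom.mono (measurable_toeplitz_opNorm n X' hmeas').aestronglyMeasurable
      filter_upwards with ω
      rw [Real.norm_eq_abs, Real.norm_eq_abs,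
        abs_of_nonneg (show (0:ℝ) ≤ opNorm _ from norm_nonneg _)]
      refine le_trans (opNorm_toeplitz_le n _) (le_trans ?_ (le_abs_self _))
      apply mul_le_mul_of_nonneg_left _ (by norm_num)
      apply Finset.sum_le_sum
      intro k _
      rw [hX' k ω]
      split
      · exact le_rfl
      · simp
    have hABdiff : ∀ ω, |A ω - B ω| ≤ 2 * ∑ k ∈ Finset.range n, g k (X k ω) := by
      intro ω
      have h1 : toeplitz n (fun i => X i ω) - toeplitz n (fun i => X' i ω)
          = toeplitz n (fun i => X i ω - X' i ω) := by
        funext i j; simp [toeplitz, Matrix.sub_apply]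
      calc |A ω - B ω| ≤ opNorm (toeplitz n (fun i => X i ω) - toeplitz n (fun i => X' i ω)) :=
            abs_opNorm_sub_le _ _
        _ = opNorm (toeplitz n (fun i => X i ω - X' i ω)) := by rw [h1]
        _ ≤ 2 * ∑ k ∈ Finset.range n, |X k ω - X' k ω| := opNorm_toeplitz_le n _
        _ = 2 * ∑ k ∈ Finset.range n, g k (X k ω) := by
            congr 1; exact Finset.sum_congr rfl fun k _ => hdiff k ω
    have hsum_int : Integrable (fun ω => 2 * ∑ k ∈ Finset.range n, g k (X k ω)) μ :=
      (integrable_finset_sum _ fun k _ => hintk k).const_mul 2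
    calc |μ[A] - μ[B]| = |∫ ω, (A ω - B ω) ∂μ| := by rw [integral_sub hAint hBint]
      _ ≤ ∫ ω, |A ω - B ω| ∂μ := by
          simpa [Real.norm_eq_abs] using
            norm_integral_le_integral_norm (μ := μ) (fun ω => A ω - B ω)
      _ ≤ ∫ ω, 2 * ∑ k ∈ Finset.range n, g k (X k ω) ∂μ :=
          integral_mono (hAint.sub hBint).abs hsum_int hABdiff
      _ = 2 * ∑ k ∈ Finset.range n, ∫ ω, g k (X k ω) ∂μ := by
          rw [integral_const_mul, integral_finset_sum _ fun k _ => hintk k]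
      _ ≤ 2 * ∑ k ∈ Finset.range n, K * (1 / Real.sqrt (k + 1)) := by
          apply mul_le_mul_of_nonneg_left _ (by norm_num)
          exact Finset.sum_le_sum fun k _ => le_trans (le_of_eq (heqk k)) (hek k)
      _ = 2 * K * ∑ k ∈ Finset.range n, 1 / Real.sqrt (k + 1) := by
          rw [← Finset.mul_sum]; ring
      _ ≤ 2 * K * (2 * Real.sqrt n) :=
          mul_le_mul_of_nonneg_left (sum_one_div_sqrt n) (by positivity)
      _ = 4 * K * Real.sqrt n := by ring
  -- conclusion
  have hO : (fun n : ℕ =>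
      |μ[fun ω => opNorm (toeplitz n (fun i => X i ω))] -
        μ[fun ω => opNorm (toeplitz n (fun i => X' i ω))]|)
      =O[atTop] fun n : ℕ => Real.sqrt n := by
    rw [isBigO_iff]
    refine ⟨4 * K, Filter.Eventually.of_forall fun n => ?_⟩
    rw [Real.norm_eq_abs, Real.norm_eq_abs, abs_abs, abs_of_nonneg (Real.sqrt_nonneg _)]
    exact hmain n
  exact hO.trans_isLittleO sqrt_isLittleO
end

section
/- For α > 1, if X_0, X_1, ... are independent with sup_n E[X_n²·(log log(|X_n| ∨ e^e))^α] = C₁ < ∞, then for every θ > 1 there is a constant C₂ with E max_{i < θ^{k+1}} X_i² ≤ K + C₂·θ^{k+1}/(log k)^α for large k, and consequently Σ_k (E max_{i<θ^{k+1}} X_i²)/(θ^k·k) < ∞. -/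
open MeasureTheory ProbabilityTheory Filter Real


lemma log_series_summable {a : ℝ} (ha : 1 < a) :
    Summable (fun n : ℕ => 1 / ((n : ℝ) * Real.log n ^ a)) := by
  have ha0 : 0 < a := lt_trans one_pos ha
  set f : ℕ → ℝ := fun n => 1 / (((n : ℝ) + 1) * Real.log ((n : ℝ) + 1) ^ a) with hf
  have hlog_nonneg : ∀ n : ℕ, 0 ≤ Real.log ((n : ℝ) + 1) := by
    intro n
    exact Real.log_nonneg (by linarith [Nat.cast_nonneg (α := ℝ) n])
  have hpos : ∀ n : ℕ, 0 ≤ f n := by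
    intro n
    exact div_nonneg one_pos.le
      (mul_nonneg (by positivity) (Real.rpow_nonneg (hlog_nonneg n) _))
  have hmono : ∀ ⦃m n : ℕ⦄, 0 < m → m ≤ n → f n ≤ f m := by
    intro m n hm hmn
    have h2 : (2:ℝ) ≤ (m:ℝ) + 1 := by
      have : (1:ℝ) ≤ (m:ℝ) := by exact_mod_cast hm
      linarith
    have hmn' : (m:ℝ) + 1 ≤ (n:ℝ) + 1 := by
      have : (m:ℝ) ≤ (n:ℝ) := by exact_mod_cast hmn
      linarith
    have hlm : 0 < Real.log ((m:ℝ) + 1) := Real.log_pos (by linarith)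
    have hdm : 0 < ((m:ℝ) + 1) * Real.log ((m:ℝ) + 1) ^ a :=
      mul_pos (by linarith) (Real.rpow_pos_of_pos hlm _)
    apply one_div_le_one_div_of_le hdm
    apply mul_le_mul hmn' (Real.rpow_le_rpow (hlog_nonneg m)
      (Real.log_le_log (by linarith) hmn') ha0.le) (Real.rpow_nonneg (hlog_nonneg m) _)
      (by linarith)
  have hcond : Summable (fun k : ℕ => (2:ℝ) ^ k * f (2 ^ k)) := by
    rw [← summable_nat_add_iff 1]
    have hcmp : Summable (fun k : ℕ => (1 / ((k:ℝ)+1) ^ a) * (1 / Real.log 2 ^ a)) := by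
      apply Summable.mul_right
      have := (Real.summable_one_div_nat_rpow (p := a)).mpr ha
      have h2 := (summable_nat_add_iff (f := fun n : ℕ => 1 / (n : ℝ) ^ a) 1).mpr this
      simpa using h2
    apply Summable.of_nonneg_of_le (fun k => mul_nonneg (by positivity) (hpos _)) _ hcmp
    intro k
    set K : ℕ := k + 1 with hK
    have hNc : ((2 ^ K : ℕ) : ℝ) = (2:ℝ) ^ K := by push_cast; ring
    have hN1 : (1:ℝ) ≤ (2:ℝ) ^ K := one_le_pow₀ (by norm_num)
    have hlogN : 0 < Real.log ((2:ℝ) ^ K) := Real.log_pos (by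
      have : (2:ℝ) ≤ (2:ℝ) ^ K := by
        calc (2:ℝ) = 2 ^ 1 := (pow_one 2).symm
        _ ≤ 2 ^ K := pow_le_pow_right₀ (by norm_num) (Nat.le_add_left 1 k)
      linarith)
    have key : (2:ℝ) ^ K * f (2 ^ K) ≤ 1 / Real.log ((2:ℝ) ^ K) ^ a := by
      rw [hf]
      simp only [hNc]
      rw [mul_one_div]
      have hlm1 : 0 < Real.log ((2:ℝ)^K + 1) := Real.log_pos (by linarith)
      rw [div_le_div_iff₀ (mul_pos (by positivity) (Real.rpow_pos_of_pos hlm1 _)) (Real.rpow_pos_of_pos hlogN _)]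
      have hlogle : Real.log ((2:ℝ)^K) ^ a ≤ Real.log ((2:ℝ)^K + 1) ^ a :=
        Real.rpow_le_rpow hlogN.le (Real.log_le_log (by positivity) (by linarith)) ha0.le
      calc (2:ℝ) ^ K * Real.log ((2:ℝ)^K) ^ a
          ≤ ((2:ℝ)^K + 1) * Real.log ((2:ℝ)^K + 1) ^ a := by
            apply mul_le_mul (by linarith) hlogle (Real.rpow_nonneg hlogN.le _) (by positivity)
        _ = 1 * (((2:ℝ)^K + 1) * Real.log ((2:ℝ)^K + 1) ^ a) := by ring
    refine key.trans ?_
    rw [Real.log_pow]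
    have : ((K:ℝ) * Real.log 2) ^ a = (K:ℝ) ^ a * Real.log 2 ^ a :=
      Real.mul_rpow (Nat.cast_nonneg K) (Real.log_nonneg (by norm_num))
    rw [this]
    apply le_of_eq
    rw [hK]
    push_cast
    rw [one_div, mul_inv, ← one_div ((_:ℝ)^a), ← one_div (Real.log 2 ^a)]
  have := (summable_condensed_iff_of_nonneg hpos hmono).mp hcond
  have h2 := (summable_nat_add_iff (f := fun n : ℕ => 1 / ((n : ℝ) * Real.log n ^ a)) 1).mp ?_
  · exact h2
  · convert this using 2 with n
    · rfl
    · push_cast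
      rfl


lemma eventually_big {c a : ℝ} (hc : 0 < c) (ha : 0 < a) :
    ∀ᶠ k : ℕ in atTop, 3 ≤ k ∧
      Real.sqrt k + Real.exp 1 + a * Real.log (Real.log k) ≤ ((k:ℝ) + 1) * c / 2 := by
  have hs : Tendsto (fun k : ℕ => Real.sqrt (k : ℝ)) atTop atTop := by
    have h1 : Tendsto (fun x : ℝ => x ^ (1/2 : ℝ)) atTop atTop := tendsto_rpow_atTop (by norm_num)
    have := h1.comp (tendsto_natCast_atTop_atTop (R := ℝ))
    refine this.congr fun k => ?_
    simp [Function.comp, Real.sqrt_eq_rpow]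
  have hlin : Tendsto (fun k : ℕ => ((k:ℝ) + 1) * c / 2 - (2*a+1) * Real.sqrt (k:ℝ)) atTop atTop := by
    have h2 : Tendsto (fun k : ℕ => (c/2) * Real.sqrt (k:ℝ) - (2*a+1)) atTop atTop :=
      tendsto_atTop_add_const_right _ _ (hs.const_mul_atTop (by positivity))
    have h3 := hs.atTop_mul_atTop₀ h2
    have h4 := tendsto_atTop_add_const_right atTop (c/2) h3
    refine h4.congr fun k => ?_
    have : Real.sqrt (k:ℝ) * Real.sqrt (k:ℝ) = (k:ℝ) :=
      Real.mul_self_sqrt (Nat.cast_nonneg k)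
    ring_nf
    nlinarith [this]
  have hE2 : ∀ᶠ k : ℕ in atTop,
      (2*a+1) * Real.sqrt (k:ℝ) + Real.exp 1 ≤ ((k:ℝ) + 1) * c / 2 := by
    filter_upwards [hlin.eventually_ge_atTop (Real.exp 1)] with k hk
    linarith
  filter_upwards [hE2, eventually_ge_atTop 3] with k hk hk3
  refine ⟨hk3, ?_⟩
  have hk1 : (3:ℝ) ≤ (k:ℝ) := by exact_mod_cast hk3
  have hlogk : 1 ≤ Real.log k := by
    rw [show (1:ℝ) = Real.log (Real.exp 1) from (Real.log_exp 1).symm]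
    apply Real.log_le_log (Real.exp_pos 1)
    linarith [Real.exp_one_lt_d9]
  have hsq : 0 < Real.sqrt (k:ℝ) := Real.sqrt_pos.mpr (by linarith)
  have h5 : Real.log (Real.log k) ≤ Real.log k := by
    have := Real.log_le_sub_one_of_pos (show (0:ℝ) < Real.log k by linarith)
    linarith
  have h6 : Real.log (k:ℝ) ≤ 2 * Real.sqrt (k:ℝ) := by
    have hls : Real.log (Real.sqrt (k:ℝ)) = Real.log (k:ℝ) / 2 :=
      Real.log_sqrt (Nat.cast_nonneg k)
    have := Real.log_le_sub_one_of_pos hsq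
    linarith
  have h7 : a * Real.log (Real.log k) ≤ a * (2 * Real.sqrt (k:ℝ)) :=
    mul_le_mul_of_nonneg_left (by linarith) ha.le
  linarith



theorem stmt17 {Ω : Type*} [MeasurableSpace Ω] (μ : Measure Ω) [IsProbabilityMeasure μ]
    (α : ℝ) (hα : 1 < α)
    (X : ℕ → Ω → ℝ) (hmeas : ∀ i, Measurable (X i))
    (hindep : iIndepFun X μ)
    (hint : ∀ n, Integrable
      (fun ω => X n ω ^ 2 * Real.log (Real.log (max |X n ω| (Real.exp (Real.exp 1)))) ^ α) μ)
    (C₁ : ℝ)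
    (hC₁ : ∀ n, μ[fun ω =>
      X n ω ^ 2 * Real.log (Real.log (max |X n ω| (Real.exp (Real.exp 1)))) ^ α] ≤ C₁) :
    ∀ θ : ℝ, 1 < θ →
      (∃ K C₂ : ℝ, ∃ k₀ : ℕ, ∀ k ≥ k₀,
        μ[fun ω => ⨆ i ∈ Finset.range ⌈θ ^ (k + 1)⌉₊, X i ω ^ 2] ≤
          K + C₂ * θ ^ (k + 1) / Real.log k ^ α) ∧
      Summable (fun k : ℕ =>
        μ[fun ω => ⨆ i ∈ Finset.range ⌈θ ^ (k + 1)⌉₊, X i ω ^ 2] / (θ ^ k * k)) := by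
  have hα0 : (0:ℝ) < α := lt_trans one_pos hα
  set g : ℕ → Ω → ℝ := fun n ω =>
    X n ω ^ 2 * Real.log (Real.log (max |X n ω| (Real.exp (Real.exp 1)))) ^ α with hg
  -- the log-log factor is at least 1
  have hll_one : ∀ n ω, 1 ≤ Real.log (Real.log (max |X n ω| (Real.exp (Real.exp 1)))) := by
    intro n ω
    have h1 : Real.exp (Real.exp 1) ≤ max |X n ω| (Real.exp (Real.exp 1)) := le_max_right _ _
    have h2 : Real.exp 1 ≤ Real.log (max |X n ω| (Real.exp (Real.exp 1))) := by
      calc Real.exp 1 = Real.log (Real.exp (Real.exp 1)) := (Real.log_exp _).symm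
      _ ≤ _ := Real.log_le_log (Real.exp_pos _) h1
    calc (1:ℝ) = Real.log (Real.exp 1) := (Real.log_exp 1).symm
    _ ≤ _ := Real.log_le_log (Real.exp_pos 1) h2
  have hfac_one : ∀ n ω, 1 ≤ Real.log (Real.log (max |X n ω| (Real.exp (Real.exp 1)))) ^ α := by
    intro n ω
    calc (1:ℝ) = Real.log (Real.log (max |X n ω| (Real.exp (Real.exp 1)))) ^ (0:ℝ) :=
      (Real.rpow_zero _).symm
    _ ≤ _ := Real.rpow_le_rpow_of_exponent_le (hll_one n ω) hα0.le
  have hg_nonneg : ∀ n ω, 0 ≤ g n ω := fun n ω =>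
    mul_nonneg (sq_nonneg _) (le_trans zero_le_one (hfac_one n ω))
  have hX2_le_g : ∀ n ω, X n ω ^ 2 ≤ g n ω := by
    intro n ω
    calc X n ω ^ 2 = X n ω ^ 2 * 1 := (mul_one _).symm
    _ ≤ g n ω := mul_le_mul_of_nonneg_left (hfac_one n ω) (sq_nonneg _)
  have hC₁0 : 0 ≤ C₁ :=
    le_trans (integral_nonneg (hg_nonneg 0)) (hC₁ 0)
  intro θ hθ
  have hθ0 : (0:ℝ) < θ := lt_trans one_pos hθ
  set c : ℝ := Real.log θ with hcdef
  have hc : 0 < c := Real.log_pos hθ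
  obtain ⟨k₀, hk₀⟩ := (eventually_big hc hα0).exists_forall_of_atTop
  -- the key integral bound
  have key : ∀ k ≥ k₀, μ[fun ω => ⨆ i ∈ Finset.range ⌈θ ^ (k + 1)⌉₊, X i ω ^ 2] ≤
      2 ^ α * C₁ + (1 + 2 ^ α * C₁) * θ ^ (k + 1) / Real.log k ^ α := by
    intro k hk
    obtain ⟨hk3, hkineq⟩ := hk₀ k hk
    have hk3' : (3:ℝ) ≤ (k:ℝ) := by exact_mod_cast hk3
    have hlogk : 1 ≤ Real.log k := by
      rw [show (1:ℝ) = Real.log (Real.exp 1) from (Real.log_exp 1).symm]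
      exact Real.log_le_log (Real.exp_pos 1) (by linarith [Real.exp_one_lt_d9])
    have hlogk0 : 0 < Real.log k := lt_of_lt_of_le one_pos hlogk
    set L : ℝ := ((k:ℝ) + 1) * c / 2 - α * Real.log (Real.log k) with hL
    have hsqrt_nonneg : 0 ≤ Real.sqrt (k:ℝ) := Real.sqrt_nonneg _
    have hLe : Real.exp 1 ≤ L := by rw [hL]; linarith
    have hLsqrt : Real.sqrt (k:ℝ) ≤ L := by
      rw [hL]; linarith [Real.exp_pos 1]
    have hL0 : 0 < L := lt_of_lt_of_le (Real.exp_pos 1) hLe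
    have hlogL1 : 1 ≤ Real.log L := by
      rw [show (1:ℝ) = Real.log (Real.exp 1) from (Real.log_exp 1).symm]
      exact Real.log_le_log (Real.exp_pos 1) hLe
    have hlogL0 : 0 < Real.log L := lt_of_lt_of_le one_pos hlogL1
    have hlogL : Real.log k / 2 ≤ Real.log L := by
      calc Real.log k / 2 = Real.log (Real.sqrt (k:ℝ)) := (Real.log_sqrt (by linarith)).symm
      _ ≤ Real.log L := Real.log_le_log (Real.sqrt_pos.mpr (by linarith)) hLsqrt
    set s : ℝ := Real.exp L with hs
    have hs0 : 0 < s := Real.exp_pos L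
    set D : ℝ := Real.log L ^ α with hD
    have hD0 : 0 < D := Real.rpow_pos_of_pos hlogL0 _
    have hDge : Real.log k ^ α / 2 ^ α ≤ D := by
      rw [hD]
      calc Real.log k ^ α / 2 ^ α = (Real.log k / 2) ^ α :=
        (Real.div_rpow (by linarith) (by norm_num) α).symm
      _ ≤ Real.log L ^ α := Real.rpow_le_rpow (by linarith) hlogL hα0.le
    set N : ℕ := ⌈θ ^ (k + 1)⌉₊ with hN
    -- pointwise bound
    have hpt : ∀ ω, (⨆ i ∈ Finset.range N, X i ω ^ 2) ≤
        s ^ 2 + (∑ i ∈ Finset.range N, g i ω) / D := by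
      intro ω
      have hsum_nonneg : 0 ≤ ∑ j ∈ Finset.range N, g j ω :=
        Finset.sum_nonneg fun j _ => hg_nonneg j ω
      have hRHS0 : 0 ≤ s ^ 2 + (∑ i ∈ Finset.range N, g i ω) / D :=
        add_nonneg (sq_nonneg s) (div_nonneg hsum_nonneg hD0.le)
      refine Real.iSup_le (fun i => Real.iSup_le (fun hi => ?_) hRHS0) hRHS0
      have hsum_ge : g i ω / D ≤ (∑ j ∈ Finset.range N, g j ω) / D :=
        (div_le_div_iff_of_pos_right hD0).mpr (Finset.single_le_sum (fun j _ => hg_nonneg j ω) hi)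
      by_cases hxs : |X i ω| ≤ s
      · have h1 : X i ω ^ 2 ≤ s ^ 2 := by
          rw [← sq_abs]
          exact pow_le_pow_left₀ (abs_nonneg _) hxs 2
        have h2 : 0 ≤ (∑ j ∈ Finset.range N, g j ω) / D := div_nonneg hsum_nonneg hD0.le
        linarith
      · push_neg at hxs
        have hes : Real.exp (Real.exp 1) ≤ s := Real.exp_le_exp.mpr hLe
        have hmax : max |X i ω| (Real.exp (Real.exp 1)) = |X i ω| :=
          max_eq_left (hes.trans hxs.le)
        have hlogx : L ≤ Real.log |X i ω| := by
          calc L = Real.log s := (Real.log_exp L).symm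
          _ ≤ Real.log |X i ω| := Real.log_le_log hs0 hxs.le
        have hll : Real.log L ≤ Real.log (Real.log |X i ω|) := Real.log_le_log hL0 hlogx
        have hfac : D ≤ Real.log (Real.log (max |X i ω| (Real.exp (Real.exp 1)))) ^ α := by
          rw [hmax, hD]
          exact Real.rpow_le_rpow hlogL0.le hll hα0.le
        have h3 : X i ω ^ 2 ≤ g i ω / D := by
          rw [le_div_iff₀ hD0]
          calc X i ω ^ 2 * D
              ≤ X i ω ^ 2 * Real.log (Real.log (max |X i ω| (Real.exp (Real.exp 1)))) ^ α :=
                mul_le_mul_of_nonneg_left hfac (sq_nonneg _)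
            _ = g i ω := rfl
        have h4 : 0 ≤ s ^ 2 := sq_nonneg s
        linarith
    -- measurability and nonnegativity of the sup
    have hM_nonneg : ∀ ω, 0 ≤ (⨆ i ∈ Finset.range N, X i ω ^ 2) := fun ω =>
      Real.iSup_nonneg fun i => Real.iSup_nonneg fun _ => sq_nonneg _
    have hM_meas : Measurable (fun ω => ⨆ i ∈ Finset.range N, X i ω ^ 2) :=
      Measurable.iSup fun i => Measurable.iSup_Prop _ ((hmeas i).pow_const 2)
    have hB_int : Integrable (fun ω => s ^ 2 + (∑ i ∈ Finset.range N, g i ω) / D) μ := by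
      apply (integrable_const _).add
      exact (integrable_finset_sum _ (fun i _ => hint i)).div_const D
    have hM_int : Integrable (fun ω => ⨆ i ∈ Finset.range N, X i ω ^ 2) μ := by
      apply Integrable.mono' hB_int hM_meas.aestronglyMeasurable
      apply ae_of_all
      intro ω
      rw [Real.norm_eq_abs, abs_of_nonneg (hM_nonneg ω)]
      exact hpt ω
    have hint1 : μ[fun ω => ⨆ i ∈ Finset.range N, X i ω ^ 2] ≤
        s ^ 2 + ((N:ℝ) * C₁) / D := by
      calc μ[fun ω => ⨆ i ∈ Finset.range N, X i ω ^ 2]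
          ≤ μ[fun ω => s ^ 2 + (∑ i ∈ Finset.range N, g i ω) / D] :=
            integral_mono (f := fun ω => ⨆ i ∈ Finset.range N, X i ω ^ 2)
              (g := fun ω => s ^ 2 + (∑ i ∈ Finset.range N, g i ω) / D) hM_int hB_int hpt
        _ = s ^ 2 + (∑ i ∈ Finset.range N, μ[g i]) / D := by
            rw [integral_add (integrable_const _)
              ((integrable_finset_sum _ (fun i _ => hint i)).div_const D)]
            rw [integral_const]
            simp only [measure_univ, probReal_univ, ENNReal.toReal_one, smul_eq_mul, one_mul]
            rw [integral_div, integral_finset_sum _ (fun i _ => hint i)]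
        _ ≤ s ^ 2 + ((N:ℝ) * C₁) / D := by
            gcongr
            calc ∑ i ∈ Finset.range N, μ[g i] ≤ ∑ _i ∈ Finset.range N, C₁ :=
              Finset.sum_le_sum (fun i _ => hC₁ i)
            _ = (N:ℝ) * C₁ := by rw [Finset.sum_const, Finset.card_range]; ring
    -- numeric bounds
    have hθk1 : (0:ℝ) < θ ^ (k + 1) := pow_pos hθ0 _
    have hlogkα1 : (1:ℝ) ≤ Real.log k ^ α := by
      calc (1:ℝ) = Real.log k ^ (0:ℝ) := (Real.rpow_zero _).symm
      _ ≤ Real.log k ^ α := Real.rpow_le_rpow_of_exponent_le hlogk hα0.le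
    have hlogkα0 : (0:ℝ) < Real.log k ^ α := lt_of_lt_of_le one_pos hlogkα1
    have hs2 : s ^ 2 ≤ θ ^ (k + 1) / Real.log k ^ α := by
      have he1 : s ^ 2 = Real.exp (((k:ℝ) + 1) * c) *
          Real.exp (-(2 * α) * Real.log (Real.log k)) := by
        rw [hs, sq, ← Real.exp_add, ← Real.exp_add]
        congr 1
        rw [hL]; ring
      have he2 : Real.exp (((k:ℝ) + 1) * c) = θ ^ (k + 1) := by
        have hcast : ((k:ℝ) + 1) = ((k + 1 : ℕ) : ℝ) := by push_cast; ring
        rw [hcast, Real.exp_nat_mul, hcdef, Real.exp_log hθ0]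
      have he3 : Real.exp (-(2 * α) * Real.log (Real.log k)) = Real.log k ^ (-(2 * α)) := by
        rw [Real.rpow_def_of_pos hlogk0]; ring_nf
      have he4 : Real.log k ^ (-(2 * α)) ≤ Real.log k ^ (-α) :=
        Real.rpow_le_rpow_of_exponent_le hlogk (by linarith)
      have he5 : Real.log k ^ (-α) = 1 / Real.log k ^ α := by
        rw [Real.rpow_neg (by linarith : (0:ℝ) ≤ Real.log k), one_div]
      calc s ^ 2 = θ ^ (k + 1) * Real.log k ^ (-(2 * α)) := by rw [he1, he2, he3]
      _ ≤ θ ^ (k + 1) * Real.log k ^ (-α) := by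
          exact mul_le_mul_of_nonneg_left he4 hθk1.le
      _ = θ ^ (k + 1) / Real.log k ^ α := by rw [he5]; ring
    have hNC : (N:ℝ) * C₁ / D ≤ 2 ^ α * C₁ + 2 ^ α * C₁ * θ ^ (k + 1) / Real.log k ^ α := by
      have h2α : (0:ℝ) < (2:ℝ) ^ α := Real.rpow_pos_of_pos two_pos _
      have hd0 : (0:ℝ) < Real.log k ^ α / 2 ^ α := div_pos hlogkα0 h2α
      have hNle : (N:ℝ) ≤ θ ^ (k + 1) + 1 := (Nat.ceil_lt_add_one hθk1.le).le
      have hstep1 : (N:ℝ) * C₁ / D ≤ (N:ℝ) * C₁ / (Real.log k ^ α / 2 ^ α) :=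
        div_le_div_of_nonneg_left (mul_nonneg (Nat.cast_nonneg N) hC₁0) hd0 hDge
      have hstep2 : (N:ℝ) * C₁ / (Real.log k ^ α / 2 ^ α)
          = (N:ℝ) * C₁ * 2 ^ α / Real.log k ^ α := by
        field_simp
      have hstep3 : (N:ℝ) * C₁ * 2 ^ α / Real.log k ^ α
          ≤ (θ ^ (k + 1) + 1) * C₁ * 2 ^ α / Real.log k ^ α := by
        gcongr
      have hstep4 : (θ ^ (k + 1) + 1) * C₁ * 2 ^ α / Real.log k ^ α
          = 2 ^ α * C₁ * θ ^ (k + 1) / Real.log k ^ α + 2 ^ α * C₁ / Real.log k ^ α := by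
        ring
      have hstep5 : 2 ^ α * C₁ / Real.log k ^ α ≤ 2 ^ α * C₁ := by
        calc 2 ^ α * C₁ / Real.log k ^ α ≤ 2 ^ α * C₁ / 1 :=
          div_le_div_of_nonneg_left (mul_nonneg h2α.le hC₁0) one_pos hlogkα1
        _ = 2 ^ α * C₁ := by ring
      linarith
    have hfinal : (1 + 2 ^ α * C₁) * θ ^ (k + 1) / Real.log k ^ α
        = θ ^ (k + 1) / Real.log k ^ α + 2 ^ α * C₁ * θ ^ (k + 1) / Real.log k ^ α := by
      ring
    linarith
  refine ⟨⟨2 ^ α * C₁, 1 + 2 ^ α * C₁, k₀, key⟩, ?_⟩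
  -- summability
  have h2α : (0:ℝ) < (2:ℝ) ^ α := Real.rpow_pos_of_pos two_pos _
  set K : ℝ := 2 ^ α * C₁ with hKdef
  set C₂ : ℝ := 1 + 2 ^ α * C₁ with hC₂def
  have hK0 : 0 ≤ K := mul_nonneg h2α.le hC₁0
  have hC₂0 : 0 ≤ C₂ := by rw [hC₂def]; positivity
  set k₁ : ℕ := max k₀ 3 with hk₁def
  have hb : Summable (fun k : ℕ =>
      K * (1 / θ) ^ k + (C₂ * θ) * (1 / ((k:ℝ) * Real.log k ^ α))) := by
    apply Summable.add
    · exact (summable_geometric_of_lt_one (by positivity)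
        ((div_lt_one hθ0).mpr hθ)).mul_left K
    · exact (log_series_summable hα).mul_left _
  rw [← summable_nat_add_iff k₁]
  apply Summable.of_nonneg_of_le (f := fun n : ℕ =>
    K * (1 / θ) ^ (n + k₁) + (C₂ * θ) * (1 / (((n + k₁ : ℕ):ℝ) * Real.log (n + k₁ : ℕ) ^ α)))
  · intro n
    apply div_nonneg
    · exact integral_nonneg fun ω =>
        Real.iSup_nonneg fun i => Real.iSup_nonneg fun _ => sq_nonneg _
    · positivity
  · intro n
    set k : ℕ := n + k₁ with hkdef
    have hk0 : k ≥ k₀ := le_trans (le_max_left _ _) (Nat.le_add_left _ _)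
    have hk3 : (3:ℕ) ≤ k := le_trans (le_max_right _ _) (Nat.le_add_left _ _)
    have hk3' : (3:ℝ) ≤ (k:ℝ) := by exact_mod_cast hk3
    have hlogk : 1 ≤ Real.log k := by
      rw [show (1:ℝ) = Real.log (Real.exp 1) from (Real.log_exp 1).symm]
      exact Real.log_le_log (Real.exp_pos 1) (by linarith [Real.exp_one_lt_d9])
    have hlogkα1 : (1:ℝ) ≤ Real.log k ^ α := by
      calc (1:ℝ) = Real.log k ^ (0:ℝ) := (Real.rpow_zero _).symm
      _ ≤ Real.log k ^ α := Real.rpow_le_rpow_of_exponent_le hlogk hα0.le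
    have hlogkα0 : (0:ℝ) < Real.log k ^ α := lt_of_lt_of_le one_pos hlogkα1
    have hθk : (0:ℝ) < θ ^ k := pow_pos hθ0 _
    have hden : (0:ℝ) < θ ^ k * k := mul_pos hθk (by linarith)
    have hbound := key k hk0
    have hM0 : 0 ≤ μ[fun ω => ⨆ i ∈ Finset.range ⌈θ ^ (k + 1)⌉₊, X i ω ^ 2] :=
      integral_nonneg fun ω =>
        Real.iSup_nonneg fun i => Real.iSup_nonneg fun _ => sq_nonneg _
    calc μ[fun ω => ⨆ i ∈ Finset.range ⌈θ ^ (k + 1)⌉₊, X i ω ^ 2] / (θ ^ k * k)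
        ≤ (K + C₂ * θ ^ (k + 1) / Real.log k ^ α) / (θ ^ k * k) := by
          exact div_le_div_of_nonneg_right hbound hden.le
      _ = K / (θ ^ k * k) + (C₂ * θ ^ (k + 1) / Real.log k ^ α) / (θ ^ k * k) := by
          rw [add_div]
      _ ≤ K * (1 / θ) ^ k + (C₂ * θ) * (1 / ((k:ℝ) * Real.log k ^ α)) := by
          have hA : K / (θ ^ k * k) ≤ K * (1 / θ) ^ k := by
            have h1 : θ ^ k ≤ θ ^ k * k := by nlinarith
            calc K / (θ ^ k * k) ≤ K / θ ^ k := div_le_div_of_nonneg_left hK0 hθk h1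
            _ = K * (1 / θ) ^ k := by rw [div_pow, one_pow]; ring
          have hB : (C₂ * θ ^ (k + 1) / Real.log k ^ α) / (θ ^ k * k)
              = (C₂ * θ) * (1 / ((k:ℝ) * Real.log k ^ α)) := by
            rw [pow_succ, div_div]
            rw [show C₂ * (θ ^ k * θ) = θ ^ k * (C₂ * θ) from by ring]
            rw [show Real.log ↑k ^ α * (θ ^ k * ↑k) = θ ^ k * (↑k * Real.log ↑k ^ α) from by ring]
            rw [mul_div_mul_left _ _ (ne_of_gt hθk), mul_one_div]
          exact add_le_add hA (le_of_eq hB)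
  · exact (summable_nat_add_iff (f := fun k : ℕ =>
      K * (1 / θ) ^ k + (C₂ * θ) * (1 / ((k:ℝ) * Real.log k ^ α))) k₁).mpr hb
end
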